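/- Let F : ℝ → ℝ be nondecreasing and concave, let q > 0, let w : [0,∞) → ℝ be continuous, let x, y ∈ ℝ, λ ∈ [0,1], and set z = λx + (1−λ)y. Suppose U_x, U_y, U_z : [0,∞) → ℝ are continuous functions satisfying U_a(t) = a + w(t) − ∫₀ᵗ F(U_a(s)) ds for all t ≥ 0, for a ∈ {x, y, z}. Then for every t ≥ 0, ∫₀ᵗ e^{−qs} F(U_z(s)) ds ≥ λ·∫₀ᵗ e^{−qs} F(U_x(s)) ds + (1−λ)·∫₀ᵗ e^{−qs} F(U_y(s)) ds. -/

import Mathlib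

open intervalIntegral MeasureTheory Set Real

/-- pathwise concavity inequality. If F is nondecreasing and concave,
q > 0, and U_x, U_y, U_z are continuous solutions of U_a(t) = a + w(t) − ∫₀ᵗ F(U_a(s)) ds
for a = x, y, z := λx + (1−λ)y driven by a common continuous path w, then for all t ≥ 0,
∫₀ᵗ e^{−qs} F(U_z(s)) ds ≥ λ·∫₀ᵗ e^{−qs} F(U_x(s)) ds + (1−λ)·∫₀ᵗ e^{−qs} F(U_y(s)) ds. -/
theorem stmt_5 (F : ℝ → ℝ) (hFmono : Monotone F) (hFconc : ConcaveOn ℝ Set.univ F)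
    (q : ℝ) (hq : 0 < q)
    (w : ℝ → ℝ) (hw : ContinuousOn w (Set.Ici 0))
    (x y l : ℝ) (hl : l ∈ Set.Icc (0:ℝ) 1) (z : ℝ) (hz : z = l * x + (1 - l) * y)
    (Ux Uy Uz : ℝ → ℝ)
    (hUxc : ContinuousOn Ux (Set.Ici 0)) (hUyc : ContinuousOn Uy (Set.Ici 0))
    (hUzc : ContinuousOn Uz (Set.Ici 0))
    (hUx : ∀ t ≥ (0:ℝ), Ux t = x + w t - ∫ s in (0:ℝ)..t, F (Ux s))
    (hUy : ∀ t ≥ (0:ℝ), Uy t = y + w t - ∫ s in (0:ℝ)..t, F (Uy s))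
    (hUz : ∀ t ≥ (0:ℝ), Uz t = z + w t - ∫ s in (0:ℝ)..t, F (Uz s)) :
    ∀ t ≥ (0:ℝ),
      l * (∫ s in (0:ℝ)..t, Real.exp (-q * s) * F (Ux s)) +
          (1 - l) * (∫ s in (0:ℝ)..t, Real.exp (-q * s) * F (Uy s)) ≤
        ∫ s in (0:ℝ)..t, Real.exp (-q * s) * F (Uz s) := by
  obtain ⟨hl0, hl1⟩ := hl
  have hFc : Continuous F := hFconc.locallyLipschitz.continuous
  have hfx : ContinuousOn (fun s => F (Ux s)) (Set.Ici 0) := hFc.comp_continuousOn hUxc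
  have hfy : ContinuousOn (fun s => F (Uy s)) (Set.Ici 0) := hFc.comp_continuousOn hUyc
  have hfz : ContinuousOn (fun s => F (Uz s)) (Set.Ici 0) := hFc.comp_continuousOn hUzc
  -- generic interval integrability on nonneg intervals
  have hsub : ∀ a b : ℝ, 0 ≤ a → 0 ≤ b → Set.uIcc a b ⊆ Set.Ici 0 := by
    intro a b ha hb u hu
    exact le_trans (le_min ha hb) hu.1
  have hII : ∀ (f : ℝ → ℝ), ContinuousOn f (Set.Ici 0) → ∀ a b : ℝ, 0 ≤ a → 0 ≤ b →
      IntervalIntegrable f volume a b := by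
    intro f hf a b ha hb
    exact (hf.mono (hsub a b ha hb)).intervalIntegrable
  set g : ℝ → ℝ := fun s => F (Uz s) - (l * F (Ux s) + (1 - l) * F (Uy s)) with hgdef
  have hgc : ContinuousOn g (Set.Ici 0) := by
    apply hfz.sub (((continuousOn_const).mul hfx).add ((continuousOn_const).mul hfy))
  set G : ℝ → ℝ := fun u => (∫ s in (0:ℝ)..u, F (Uz s)) -
      (l * (∫ s in (0:ℝ)..u, F (Ux s)) + (1 - l) * (∫ s in (0:ℝ)..u, F (Uy s))) with hGdef
  have hGrepr : ∀ a b : ℝ, 0 ≤ a → 0 ≤ b → G b - G a = ∫ s in a..b, g s := by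
    intro a b ha hb
    have ex : ∫ s in a..b, F (Ux s) = (∫ s in (0:ℝ)..b, F (Ux s)) - ∫ s in (0:ℝ)..a, F (Ux s) := by
      rw [intervalIntegral.integral_interval_sub_left (hII _ hfx 0 b le_rfl hb) (hII _ hfx 0 a le_rfl ha)]
    have ey : ∫ s in a..b, F (Uy s) = (∫ s in (0:ℝ)..b, F (Uy s)) - ∫ s in (0:ℝ)..a, F (Uy s) := by
      rw [intervalIntegral.integral_interval_sub_left (hII _ hfy 0 b le_rfl hb) (hII _ hfy 0 a le_rfl ha)]
    have ez : ∫ s in a..b, F (Uz s) = (∫ s in (0:ℝ)..b, F (Uz s)) - ∫ s in (0:ℝ)..a, F (Uz s) := by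
      rw [intervalIntegral.integral_interval_sub_left (hII _ hfz 0 b le_rfl hb) (hII _ hfz 0 a le_rfl ha)]
    have : ∫ s in a..b, g s = (∫ s in a..b, F (Uz s)) -
        (l * (∫ s in a..b, F (Ux s)) + (1 - l) * (∫ s in a..b, F (Uy s))) := by
      rw [hgdef]
      rw [intervalIntegral.integral_sub (hII _ hfz a b ha hb)
        (((hII _ hfx a b ha hb).const_mul l).add ((hII _ hfy a b ha hb).const_mul (1-l))),
        intervalIntegral.integral_add ((hII _ hfx a b ha hb).const_mul l)
          ((hII _ hfy a b ha hb).const_mul (1-l)),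
        intervalIntegral.integral_const_mul, intervalIntegral.integral_const_mul]
    rw [this, ex, ey, ez, hGdef]
    ring
  have hG0 : G 0 = 0 := by simp [hGdef]
  -- pointwise positivity of g where G < 0
  have hpt : ∀ s : ℝ, 0 ≤ s → G s < 0 → 0 ≤ g s := by
    intro s hs hGs
    have hcomb : l * Ux s + (1 - l) * Uy s = Uz s + G s := by
      rw [hUx s hs, hUy s hs, hUz s hs, hz, hGdef]; ring
    have h1 : l * Ux s + (1 - l) * Uy s ≤ Uz s := by linarith
    have h2 : l * F (Ux s) + (1 - l) * F (Uy s) ≤ F (l * Ux s + (1 - l) * Uy s) := by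
      have := hFconc.2 (Set.mem_univ (Ux s)) (Set.mem_univ (Uy s)) hl0
        (sub_nonneg.mpr hl1) (by ring)
      simpa using this
    have h3 := hFmono h1
    simp only [hgdef]
    linarith
  -- Step 1: G nonneg
  have hGpos : ∀ u : ℝ, 0 ≤ u → 0 ≤ G u := by
    intro t₀ ht₀
    by_contra hneg
    push_neg at hneg
    set S : Set ℝ := {s | s ∈ Set.Icc 0 t₀ ∧ 0 ≤ G s} with hSdef
    have hGcont : ContinuousOn G (Set.Icc 0 t₀) := by
      have h0 : (Set.Icc (0:ℝ) t₀) ⊆ Set.uIcc 0 t₀ := by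
        rw [Set.uIcc_of_le ht₀]
      have cx : ContinuousOn (fun u => ∫ s in (0:ℝ)..u, F (Ux s)) (Set.Icc 0 t₀) :=
        (continuousOn_primitive_interval ((hfx.mono (hsub 0 t₀ le_rfl ht₀)).integrableOn_compact isCompact_uIcc)).mono h0
      have cy : ContinuousOn (fun u => ∫ s in (0:ℝ)..u, F (Uy s)) (Set.Icc 0 t₀) :=
        (continuousOn_primitive_interval ((hfy.mono (hsub 0 t₀ le_rfl ht₀)).integrableOn_compact isCompact_uIcc)).mono h0
      have cz : ContinuousOn (fun u => ∫ s in (0:ℝ)..u, F (Uz s)) (Set.Icc 0 t₀) :=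
        (continuousOn_primitive_interval ((hfz.mono (hsub 0 t₀ le_rfl ht₀)).integrableOn_compact isCompact_uIcc)).mono h0
      exact cz.sub ((continuousOn_const.mul cx).add (continuousOn_const.mul cy))
    have hSclosed : IsClosed S := by
      have hSeq : S = Set.Icc 0 t₀ ∩ G ⁻¹' Set.Ici 0 := rfl
      rw [hSeq]
      exact hGcont.preimage_isClosed_of_isClosed isClosed_Icc isClosed_Ici
    have hS0 : (0:ℝ) ∈ S := ⟨⟨le_rfl, ht₀⟩, le_of_eq hG0.symm⟩
    have hSne : S.Nonempty := ⟨0, hS0⟩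
    have hScomp : IsCompact S := isCompact_Icc.of_isClosed_subset hSclosed (fun s hs => hs.1)
    set s₀ := sSup S with hs₀def
    have hs₀S : s₀ ∈ S := hScomp.sSup_mem hSne
    have hs₀0 : 0 ≤ s₀ := hs₀S.1.1
    have hs₀t : s₀ ≤ t₀ := hs₀S.1.2
    have hGs₀ : 0 ≤ G s₀ := hs₀S.2
    have hneg' : ∀ s ∈ Set.Ioc s₀ t₀, G s < 0 := by
      intro s hs
      by_contra h
      push_neg at h
      have : s ∈ S := ⟨⟨le_trans hs₀0 hs.1.le, hs.2⟩, h⟩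
      exact absurd (le_csSup hScomp.bddAbove this) (not_le.mpr hs.1)
    have hint : 0 ≤ ∫ s in s₀..t₀, g s := by
      rw [intervalIntegral.integral_of_le hs₀t]
      apply MeasureTheory.setIntegral_nonneg measurableSet_Ioc
      intro s hs
      exact hpt s (le_trans hs₀0 hs.1.le) (hneg' s hs)
    have := hGrepr s₀ t₀ hs₀0 ht₀
    linarith
  -- Step 2: integration by parts with exponential weight
  intro t ht
  have hGconT : ContinuousOn G (Set.Icc 0 t) := by
    have h0 : (Set.Icc (0:ℝ) t) ⊆ Set.uIcc 0 t := by rw [Set.uIcc_of_le ht]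
    have cx : ContinuousOn (fun u => ∫ s in (0:ℝ)..u, F (Ux s)) (Set.Icc 0 t) :=
      (continuousOn_primitive_interval ((hfx.mono (hsub 0 t le_rfl ht)).integrableOn_compact isCompact_uIcc)).mono h0
    have cy : ContinuousOn (fun u => ∫ s in (0:ℝ)..u, F (Uy s)) (Set.Icc 0 t) :=
      (continuousOn_primitive_interval ((hfy.mono (hsub 0 t le_rfl ht)).integrableOn_compact isCompact_uIcc)).mono h0
    have cz : ContinuousOn (fun u => ∫ s in (0:ℝ)..u, F (Uz s)) (Set.Icc 0 t) :=
      (continuousOn_primitive_interval ((hfz.mono (hsub 0 t le_rfl ht)).integrableOn_compact isCompact_uIcc)).mono h0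
    exact cz.sub ((continuousOn_const.mul cx).add (continuousOn_const.mul cy))
  -- derivative of G at interior points
  have hGderiv : ∀ s ∈ Set.Ioo (0:ℝ) t, HasDerivAt G (g s) s := by
    intro s hs
    have hsIoi : s ∈ Set.Ioi (0:ℝ) := hs.1
    have hmem : Set.Ici (0:ℝ) ∈ nhds s := Ici_mem_nhds hs.1
    have hd : ∀ (f : ℝ → ℝ), ContinuousOn f (Set.Ici 0) →
        HasDerivAt (fun u => ∫ r in (0:ℝ)..u, f r) (f s) s := by
      intro f hf
      apply intervalIntegral.integral_hasDerivAt_right (hII _ hf 0 s le_rfl hs.1.le)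
      · exact ContinuousOn.stronglyMeasurableAtFilter isOpen_Ioi (hf.mono Set.Ioi_subset_Ici_self) s hsIoi
      · exact hf.continuousAt hmem
    have := ((hd _ hfz).sub (((hd _ hfx).const_mul l).add ((hd _ hfy).const_mul (1-l))))
    exact this
  -- product rule
  have hprod : ∀ s ∈ Set.Ioo (0:ℝ) t,
      HasDerivAt (fun u => Real.exp (-q * u) * G u)
        (Real.exp (-q * s) * g s - q * (Real.exp (-q * s) * G s)) s := by
    intro s hs
    have he : HasDerivAt (fun u => Real.exp (-q * u)) (-q * Real.exp (-q * s)) s := by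
      have h1 : HasDerivAt (fun u : ℝ => -q * u) (-q) s := by
        simpa using (hasDerivAt_id s).const_mul (-q)
      simpa [mul_comm] using h1.exp
    have := he.mul (hGderiv s hs)
    exact this.congr_deriv (by ring)
  have hgcT : ContinuousOn (fun s => Real.exp (-q * s) * g s) (Set.uIcc 0 t) :=
    ((Real.continuous_exp.comp (continuous_const.mul continuous_id)).continuousOn).mul
      (hgc.mono (hsub 0 t le_rfl ht))
  have hgint : IntervalIntegrable (fun s => Real.exp (-q * s) * g s) volume 0 t :=
    hgcT.intervalIntegrable
  have hGint : IntervalIntegrable (fun s => q * (Real.exp (-q * s) * G s)) volume 0 t := by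
    apply ContinuousOn.intervalIntegrable
    apply continuousOn_const.mul
    apply (((Real.continuous_exp.comp (continuous_const.mul continuous_id)).continuousOn).mul _)
    rw [Set.uIcc_of_le ht]
    exact hGconT
  have hFTC : ∫ s in (0:ℝ)..t, (Real.exp (-q * s) * g s - q * (Real.exp (-q * s) * G s)) =
      Real.exp (-q * t) * G t - Real.exp (-q * 0) * G 0 := by
    apply intervalIntegral.integral_eq_sub_of_hasDerivAt_of_le ht
    · exact ((Real.continuous_exp.comp (continuous_const.mul continuous_id)).continuousOn).mul hGconT
    · exact hprod
    · exact hgint.sub hGint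
  rw [intervalIntegral.integral_sub hgint hGint] at hFTC
  have hGw : 0 ≤ ∫ s in (0:ℝ)..t, q * (Real.exp (-q * s) * G s) := by
    apply intervalIntegral.integral_nonneg ht
    intro u hu
    have := hGpos u hu.1
    positivity
  have hkey : 0 ≤ ∫ s in (0:ℝ)..t, Real.exp (-q * s) * g s := by
    have h1 : 0 ≤ Real.exp (-q * t) * G t := mul_nonneg (Real.exp_nonneg _) (hGpos t ht)
    rw [hG0] at hFTC
    linarith
  -- split the weighted integral of g
  have hwx : IntervalIntegrable (fun s => Real.exp (-q * s) * F (Ux s)) volume 0 t :=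
    (((Real.continuous_exp.comp (continuous_const.mul continuous_id)).continuousOn).mul
      (hfx.mono (hsub 0 t le_rfl ht))).intervalIntegrable
  have hwy : IntervalIntegrable (fun s => Real.exp (-q * s) * F (Uy s)) volume 0 t :=
    (((Real.continuous_exp.comp (continuous_const.mul continuous_id)).continuousOn).mul
      (hfy.mono (hsub 0 t le_rfl ht))).intervalIntegrable
  have hwz : IntervalIntegrable (fun s => Real.exp (-q * s) * F (Uz s)) volume 0 t :=
    (((Real.continuous_exp.comp (continuous_const.mul continuous_id)).continuousOn).mul
      (hfz.mono (hsub 0 t le_rfl ht))).intervalIntegrable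
  have hsplit : ∫ s in (0:ℝ)..t, Real.exp (-q * s) * g s =
      (∫ s in (0:ℝ)..t, Real.exp (-q * s) * F (Uz s)) -
      (l * (∫ s in (0:ℝ)..t, Real.exp (-q * s) * F (Ux s)) +
        (1 - l) * (∫ s in (0:ℝ)..t, Real.exp (-q * s) * F (Uy s))) := by
    have : (fun s => Real.exp (-q * s) * g s) = fun s =>
        Real.exp (-q * s) * F (Uz s) -
        (l * (Real.exp (-q * s) * F (Ux s)) + (1 - l) * (Real.exp (-q * s) * F (Uy s))) := by
      funext s; simp only [hgdef]; ring
    rw [this, intervalIntegral.integral_sub hwz ((hwx.const_mul l).add (hwy.const_mul (1-l))),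
      intervalIntegral.integral_add (hwx.const_mul l) (hwy.const_mul (1-l)),
      intervalIntegral.integral_const_mul, intervalIntegral.integral_const_mul]
  linarith [hkey, hsplit.symm ▸ hkey]
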